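/- Let $n=2$, $\lambda\ge 1$, $c>0$ and $d\ge 0$. Then $\int_0^{\lambda^{-2}} t^{-1}e^{-c d^2/t}\,dt \le C\,\log(2+(\lambda d)^{-1})\,(1+\lambda d)^{-N}$ for every $N\in\mathbb{N}$, with $C$ depending only on $c$ and $N$. -/

import Mathlib

open Real MeasureTheory

lemma heatAux_le {b t : ℝ} (hb : 0 < b) (ht : 0 < t) :
    t⁻¹ * Real.exp (-b / t) ≤ b⁻¹ := by
  have h1 : b / t ≤ Real.exp (b / t) := by linarith [Real.add_one_le_exp (b / t)]
  have h2 : Real.exp (-b / t) ≤ t / b := by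
    rw [neg_div, Real.exp_neg]
    calc (Real.exp (b / t))⁻¹ ≤ (b / t)⁻¹ := by
          exact inv_anti₀ (by positivity) h1
      _ = t / b := by rw [inv_div]
  calc t⁻¹ * Real.exp (-b / t) ≤ t⁻¹ * (t / b) :=
        mul_le_mul_of_nonneg_left h2 (by positivity)
    _ = b⁻¹ := by field_simp

lemma heatAux_integrable (b T : ℝ) (hb : 0 < b) :
    MeasureTheory.IntegrableOn (fun t => t⁻¹ * Real.exp (-b / t)) (Set.Ioc (0:ℝ) T) := by
  have hmeas : Measurable fun t : ℝ => t⁻¹ * Real.exp (-b / t) :=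
    measurable_inv.mul (Real.measurable_exp.comp (measurable_const.div measurable_id))
  refine Integrable.mono' (g := fun _ : ℝ => b⁻¹) ?_ hmeas.aestronglyMeasurable ?_
  · exact integrableOn_const measure_Ioc_lt_top.ne
  · filter_upwards [ae_restrict_mem measurableSet_Ioc] with t ht
    have ht0 := ht.1
    rw [Real.norm_of_nonneg (by positivity)]
    exact heatAux_le hb ht.1


lemma heatAux_int_le_one (b T : ℝ) (hb : 0 < b) (hTb : T ≤ b) (hT : 0 ≤ T) :
    ∫ t in Set.Ioc (0:ℝ) T, t⁻¹ * Real.exp (-b / t) ≤ 1 := by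
  calc ∫ t in Set.Ioc (0:ℝ) T, t⁻¹ * Real.exp (-b / t)
      ≤ ∫ _ in Set.Ioc (0:ℝ) T, b⁻¹ :=
        setIntegral_mono_on (heatAux_integrable b T hb)
          (integrableOn_const measure_Ioc_lt_top.ne) measurableSet_Ioc
          (fun t ht => heatAux_le hb ht.1)
    _ = T * b⁻¹ := by
        rw [setIntegral_const]
        simp [Real.volume_Ioc, ENNReal.toReal_ofReal hT, hT]
    _ ≤ 1 := by
        rw [← div_eq_mul_inv]
        exact (div_le_one hb).2 hTb

lemma heatAux_integral (b T : ℝ) (hb : 0 < b) (hT : 0 < T) :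
    ∫ t in Set.Ioc (0:ℝ) T, t⁻¹ * Real.exp (-b / t)
      ≤ 1 + max 0 (Real.log (T / b)) := by
  rcases le_or_gt T b with hTb | hbT
  · have := heatAux_int_le_one b T hb hTb hT.le
    have h0 : (0:ℝ) ≤ max 0 (Real.log (T / b)) := le_max_left _ _
    linarith
  · have hsplit : Set.Ioc (0:ℝ) T = Set.Ioc 0 b ∪ Set.Ioc b T :=
      (Set.Ioc_union_Ioc_eq_Ioc hb.le hbT.le).symm
    have hint2 : MeasureTheory.IntegrableOn (fun t => t⁻¹ * Real.exp (-b / t))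
        (Set.Ioc b T) :=
      (heatAux_integrable b T hb).mono_set (Set.Ioc_subset_Ioc_left hb.le)
    rw [hsplit, setIntegral_union (Set.Ioc_disjoint_Ioc_of_le le_rfl) measurableSet_Ioc
      (heatAux_integrable b b hb) hint2]
    have h1 : ∫ t in Set.Ioc (0:ℝ) b, t⁻¹ * Real.exp (-b / t) ≤ 1 :=
      heatAux_int_le_one b b hb le_rfl hb.le
    have hinv : MeasureTheory.IntegrableOn (fun t : ℝ => t⁻¹) (Set.Ioc b T) := by
      rw [← intervalIntegrable_iff_integrableOn_Ioc_of_le hbT.le]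
      exact intervalIntegrable_inv_iff.2 (Or.inr (Set.notMem_uIcc_of_lt hb hT))
    have h2 : ∫ t in Set.Ioc b T, t⁻¹ * Real.exp (-b / t) ≤ Real.log (T / b) := by
      calc ∫ t in Set.Ioc b T, t⁻¹ * Real.exp (-b / t)
          ≤ ∫ t in Set.Ioc b T, t⁻¹ :=
            setIntegral_mono_on hint2 hinv measurableSet_Ioc (by
              intro t ht
              have ht0 : 0 < t := hb.trans ht.1
              have : Real.exp (-b / t) ≤ 1 := by
                rw [Real.exp_le_one_iff, neg_div]
                exact neg_nonpos.2 (by positivity)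
              calc t⁻¹ * Real.exp (-b / t) ≤ t⁻¹ * 1 :=
                    mul_le_mul_of_nonneg_left this (by positivity)
                _ = t⁻¹ := mul_one _)
        _ = Real.log (T / b) := by
            rw [← intervalIntegral.integral_of_le hbT.le]
            exact integral_inv_of_pos hb hT
    have h0 : Real.log (T / b) ≤ max 0 (Real.log (T / b)) := le_max_right _ _
    linarith

/-- Heat-kernel time-integral estimate, `n = 2`:
`∫₀^{λ⁻²} t⁻¹ e^{-c d²/t} dt ≤ C log(2 + (λd)⁻¹) (1 + λ d)^{-N}` with
`C = C(c, N)` independent of `λ ≥ 1` and `d ≥ 0`. -/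
theorem stmt_7 (c : ℝ) (hc : 0 < c) (N : ℕ) :
    ∃ C > (0 : ℝ), ∀ lam d : ℝ, 1 ≤ lam → 0 ≤ d →
      (∫ t in Set.Ioc (0 : ℝ) (lam ^ (-2 : ℝ)),
          t⁻¹ * Real.exp (-c * d ^ 2 / t))
        ≤ C * Real.log (2 + (lam * d)⁻¹) * (1 + lam * d) ^ (-(N : ℝ)) := by
  have hL2 : (0:ℝ) < Real.log 2 := Real.log_pos (by norm_num)
  set Mc : ℝ := max 0 (Real.log (2 / c)) with hMcdef
  have hMc0 : 0 ≤ Mc := le_max_left _ _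
  set C1 : ℝ := (1 + Mc) / Real.log 2 + 2 with hC1def
  have hC1pos : 0 < C1 := by positivity
  refine ⟨C1 * Real.exp ((N:ℝ)^2 / (2*c)), by positivity, ?_⟩
  intro lam d hlam hd
  have hlam0 : 0 < lam := lt_of_lt_of_le one_pos hlam
  have hT0 : 0 < lam ^ (-2:ℝ) := Real.rpow_pos_of_pos hlam0 _
  set T := lam ^ (-2:ℝ) with hTdef
  have hTval : T = (lam ^ 2)⁻¹ := by
    rw [hTdef, show (-2:ℝ) = ((-2 : ℤ) : ℝ) by norm_num, Real.rpow_intCast, zpow_neg]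
    norm_cast
  set u : ℝ := lam * d with hudef
  have hu0 : 0 ≤ u := by positivity
  have hLle : Real.log 2 ≤ Real.log (2 + u⁻¹) :=
    Real.log_le_log (by norm_num) (by linarith [inv_nonneg.2 hu0])
  have hLpos : 0 < Real.log (2 + u⁻¹) := lt_of_lt_of_le hL2 hLle
  have hPpos : 0 < (1 + u) ^ (-(N:ℝ)) := Real.rpow_pos_of_pos (by linarith) _
  rcases hd.eq_or_lt with hd0 | hd0
  · -- d = 0 : the integrand is t⁻¹, which is not integrable, so the integral is 0
    have hne : ¬ MeasureTheory.IntegrableOn (fun t : ℝ => t⁻¹) (Set.Ioc (0:ℝ) T) := by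
      intro h
      have h' : IntervalIntegrable (fun t : ℝ => t⁻¹) volume 0 T := by
        rw [intervalIntegrable_iff_integrableOn_Ioc_of_le hT0.le]
        exact h
      rcases intervalIntegrable_inv_iff.1 h' with h2 | h2
      · exact hT0.ne h2
      · exact h2 Set.left_mem_uIcc
    have hzero : (∫ t in Set.Ioc (0 : ℝ) T, t⁻¹ * Real.exp (-c * d ^ 2 / t)) = 0 := by
      have heq : (fun t : ℝ => t⁻¹ * Real.exp (-c * d ^ 2 / t)) = fun t : ℝ => t⁻¹ := by
        funext t
        rw [← hd0]
        norm_num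
      rw [heq]
      exact integral_undef hne
    rw [hzero]
    positivity
  · -- d > 0
    have hu : 0 < u := by positivity
    set b : ℝ := c * d ^ 2 / 2 with hbdef
    have hb : 0 < b := by positivity
    set L : ℝ := Real.log (2 + u⁻¹) with hLdef
    have hptwise : ∀ t ∈ Set.Ioc (0:ℝ) T,
        t⁻¹ * Real.exp (-c * d ^ 2 / t)
          ≤ Real.exp (-b / T) * (t⁻¹ * Real.exp (-b / t)) := by
      intro t ht
      have ht0 : 0 < t := ht.1
      have htT : t ≤ T := ht.2
      have hsplitexp : Real.exp (-c * d ^ 2 / t)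
          = Real.exp (-b / t) * Real.exp (-b / t) := by
        rw [← Real.exp_add]
        congr 1
        field_simp
        ring
      have hmono : Real.exp (-b / t) ≤ Real.exp (-b / T) := by
        apply Real.exp_le_exp.2
        rw [neg_div, neg_div, neg_le_neg_iff]
        exact div_le_div_of_nonneg_left hb.le ht0 htT
      calc t⁻¹ * Real.exp (-c * d ^ 2 / t)
          = t⁻¹ * (Real.exp (-b / t) * Real.exp (-b / t)) := by rw [hsplitexp]
        _ ≤ t⁻¹ * (Real.exp (-b / T) * Real.exp (-b / t)) := by
            apply mul_le_mul_of_nonneg_left _ (by positivity)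
            exact mul_le_mul_of_nonneg_right hmono (Real.exp_nonneg _)
        _ = Real.exp (-b / T) * (t⁻¹ * Real.exp (-b / t)) := by ring
    have hintg : MeasureTheory.IntegrableOn
        (fun t : ℝ => t⁻¹ * Real.exp (-c * d ^ 2 / t)) (Set.Ioc (0:ℝ) T) := by
      have := heatAux_integrable (c * d ^ 2) T (by positivity)
      simpa [neg_mul] using this
    have hstep1 : (∫ t in Set.Ioc (0 : ℝ) T, t⁻¹ * Real.exp (-c * d ^ 2 / t))
        ≤ Real.exp (-b / T) * ∫ t in Set.Ioc (0:ℝ) T, t⁻¹ * Real.exp (-b / t) := by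
      rw [← integral_const_mul]
      exact setIntegral_mono_on hintg
        ((heatAux_integrable b T hb).const_mul _) measurableSet_Ioc hptwise
    have hstep2 : (∫ t in Set.Ioc (0:ℝ) T, t⁻¹ * Real.exp (-b / t)) ≤ C1 * L := by
      have h0 := heatAux_integral b T hb hT0
      have hTb : T / b = (2 / c) * (u⁻¹) ^ 2 := by
        rw [hTval, hbdef, hudef]
        field_simp
      have hlog : Real.log (T / b) = Real.log (2 / c) + 2 * Real.log u⁻¹ := by
        rw [hTb, Real.log_mul (by positivity) (by positivity), Real.log_pow]
        norm_num
      have hlogu : Real.log u⁻¹ ≤ L := Real.log_le_log (by positivity) (by linarith)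
      have hmax : max 0 (Real.log (T / b)) ≤ Mc + 2 * L := by
        apply max_le
        · positivity
        · rw [hlog]
          have : Real.log (2 / c) ≤ Mc := le_max_right _ _
          linarith
      have h1L : 1 ≤ (1 / Real.log 2) * L := by
        rw [div_mul_eq_mul_div, one_mul, le_div_iff₀ hL2]
        linarith
      have hMcL : Mc ≤ (Mc / Real.log 2) * L := by
        rw [div_mul_eq_mul_div, le_div_iff₀ hL2]
        exact mul_le_mul_of_nonneg_left hLle hMc0
      calc (∫ t in Set.Ioc (0:ℝ) T, t⁻¹ * Real.exp (-b / t))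
          ≤ 1 + max 0 (Real.log (T / b)) := h0
        _ ≤ (1 / Real.log 2) * L + (Mc / Real.log 2) * L + 2 * L := by linarith
        _ = C1 * L := by rw [hC1def]; ring
    have hbT2 : -b / T = -(c * u ^ 2 / 2) := by
      rw [hTval, hbdef, hudef]
      field_simp
    have hstep3 : Real.exp (-b / T)
        ≤ Real.exp ((N:ℝ)^2 / (2*c)) * (1 + u) ^ (-(N:ℝ)) := by
      have hq : (N:ℝ) * u ≤ (N:ℝ)^2 / (2*c) + c * u^2 / 2 := by
        have hkey : (N:ℝ)^2 / (2*c) + c * u^2 / 2 - (N:ℝ) * u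
            = (c * u - (N:ℝ))^2 / (2*c) := by
          field_simp
          ring
        nlinarith [div_nonneg (sq_nonneg (c * u - (N:ℝ))) (by positivity : (0:ℝ) ≤ 2*c)]
      have hpow : (1 + u) ^ N ≤ Real.exp ((N:ℝ)^2 / (2*c) + c * u^2 / 2) := by
        calc (1 + u) ^ N ≤ Real.exp u ^ N := by
              apply pow_le_pow_left₀ (by linarith) _ N
              linarith [Real.add_one_le_exp u]
          _ = Real.exp ((N:ℝ) * u) := by rw [← Real.exp_nat_mul]
          _ ≤ _ := Real.exp_le_exp.2 hq
      have hmul : Real.exp (-b / T) * (1 + u) ^ N ≤ Real.exp ((N:ℝ)^2 / (2*c)) := by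
        calc Real.exp (-b / T) * (1 + u) ^ N
            ≤ Real.exp (-b / T) * Real.exp ((N:ℝ)^2 / (2*c) + c * u^2 / 2) :=
              mul_le_mul_of_nonneg_left hpow (Real.exp_nonneg _)
          _ = Real.exp ((N:ℝ)^2 / (2*c)) := by
              rw [← Real.exp_add, hbT2]
              ring_nf
      have hrpow : (1 + u) ^ (-(N:ℝ)) = ((1 + u) ^ N)⁻¹ := by
        rw [Real.rpow_neg (by linarith), Real.rpow_natCast]
      rw [hrpow, ← div_eq_mul_inv, le_div_iff₀ (by positivity)]
      exact hmul
    have hfnonneg : 0 ≤ ∫ t in Set.Ioc (0:ℝ) T, t⁻¹ * Real.exp (-b / t) :=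
      setIntegral_nonneg measurableSet_Ioc (fun t ht => by
        have := ht.1
        positivity)
    calc (∫ t in Set.Ioc (0 : ℝ) T, t⁻¹ * Real.exp (-c * d ^ 2 / t))
        ≤ Real.exp (-b / T) * ∫ t in Set.Ioc (0:ℝ) T, t⁻¹ * Real.exp (-b / t) := hstep1
      _ ≤ Real.exp (-b / T) * (C1 * L) :=
          mul_le_mul_of_nonneg_left hstep2 (Real.exp_nonneg _)
      _ ≤ (Real.exp ((N:ℝ)^2 / (2*c)) * (1 + u) ^ (-(N:ℝ))) * (C1 * L) :=
          mul_le_mul_of_nonneg_right hstep3 (by positivity)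
      _ = C1 * Real.exp ((N:ℝ)^2 / (2*c)) * L * (1 + u) ^ (-(N:ℝ)) := by ring
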